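/- Let U ⊆ ℝ^(n+2) be open, (ξ, N) a null frame on U, and Z : U → ℝ^(n+2) a differentiable closed conformal field with factor φ : U → ℝ such that its screen part vanishes identically, Z*(p) = P_p(Z p) = 0 for all p ∈ U, and η(Z p, ξ p) ≠ 0 for all p ∈ U. Then for every p ∈ U and every screen vector v at p: A_N(p)(v) = -(η(Z p, N p)/η(Z p, ξ p)) • A*_ξ(p)(v) - (φ(p)/η(Z p, ξ p)) • v. (Flat-Minkowski-ambient form of the paper's proposition that a closed conformal field orthogonal to the screen distribution makes the null hypersurface screen quasi-conformal.) -/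

import Mathlib

open scoped BigOperators

noncomputable section

/-- Euclidean space `ℝ^m`. -/
abbrev E (m : ℕ) : Type := EuclideanSpace ℝ (Fin m)

/-- The Minkowski bilinear form `η(x,y) = -(x 0)(y 0) + ∑_{i≥1} (x i)(y i)` on `ℝ^(n+2)`. -/
def eta {n : ℕ} (x y : E (n + 2)) : ℝ :=
  (∑ i, x i * y i) - 2 * (x 0 * y 0)

/-- Screen projection `P_p(w) = w - η(w,N)ξ - η(w,ξ)N` determined by the null frame at a point. -/
def sproj {n : ℕ} (xi N w : E (n + 2)) : E (n + 2) :=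
  w - eta w N • xi - eta w xi • N

/-- Screen shape operator `A*_ξ(p)(v) = -P_p(D_v ξ (p))`. -/
def Astar {n : ℕ} (xi N : E (n + 2) → E (n + 2)) (p v : E (n + 2)) : E (n + 2) :=
  -sproj (xi p) (N p) (fderiv ℝ xi p v)

/-- Shape operator `A_N(p)(v) = -P_p(D_v N (p))`. -/
def AN {n : ℕ} (xi N : E (n + 2) → E (n + 2)) (p v : E (n + 2)) : E (n + 2) :=
  -sproj (xi p) (N p) (fderiv ℝ N p v)

/-- Transversal one-form `τ_p(v) = η(D_v N(p), ξ p)`. -/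
def tau {n : ℕ} (xi N : E (n + 2) → E (n + 2)) (p v : E (n + 2)) : ℝ :=
  eta (fderiv ℝ N p v) (xi p)

/-- Screen part `Z*(p) = P_p(Z p)` of a vector field. -/
def Zstar {n : ℕ} (xi N Z : E (n + 2) → E (n + 2)) (p : E (n + 2)) : E (n + 2) :=
  sproj (xi p) (N p) (Z p)

/-- `A_{Z⊥}(p)(v) = η(Z p, N p) • A*_ξ(p)(v) + η(Z p, ξ p) • A_N(p)(v)`. -/
def AZperp {n : ℕ} (xi N Z : E (n + 2) → E (n + 2)) (p v : E (n + 2)) : E (n + 2) :=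
  eta (Z p) (N p) • Astar xi N p v + eta (Z p) (xi p) • AN xi N p v

lemma eta_add_left {n : ℕ} (x y z : E (n + 2)) : eta (x + y) z = eta x z + eta y z := by
  simp [eta, add_mul, Finset.sum_add_distrib]; ring

lemma eta_smul_left {n : ℕ} (c : ℝ) (x z : E (n + 2)) : eta (c • x) z = c * eta x z := by
  simp only [eta, PiLp.smul_apply, smul_eq_mul]
  rw [mul_sub, Finset.mul_sum]
  congr 1
  · exact Finset.sum_congr rfl fun i _ => by ring
  · ring

lemma eta_comm {n : ℕ} (x y : E (n + 2)) : eta x y = eta y x := by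
  simp [eta, mul_comm]

def etaLin {n : ℕ} : E (n + 2) →ₗ[ℝ] E (n + 2) →ₗ[ℝ] ℝ :=
  LinearMap.mk₂ ℝ eta eta_add_left eta_smul_left
    (fun x y z => by rw [eta_comm, eta_add_left, eta_comm x y, eta_comm x z])
    (fun c x y => by rw [eta_comm, eta_smul_left, eta_comm]; simp)

def etaB {n : ℕ} : E (n + 2) →L[ℝ] E (n + 2) →L[ℝ] ℝ :=
  LinearMap.toContinuousLinearMap
    { toFun := fun x => LinearMap.toContinuousLinearMap (etaLin x)
      map_add' := fun x y => by ext z; simp [etaLin]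
      map_smul' := fun c x => by ext z; simp [etaLin] }

lemma diff_eta {n : ℕ} {F G : E (n + 2) → E (n + 2)} {p : E (n + 2)}
    (hF : DifferentiableAt ℝ F p) (hG : DifferentiableAt ℝ G p) :
    DifferentiableAt ℝ (fun q => eta (F q) (G q)) p := by
  have h := (etaB (n := n)).isBoundedBilinearMap.differentiableAt (p := (F p, G p))
  exact h.comp p (hF.prodMk hG)

lemma sproj_add {n : ℕ} (xi N w w' : E (n + 2)) :
    sproj xi N (w + w') = sproj xi N w + sproj xi N w' := by
  simp only [sproj, eta_add_left, add_smul]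
  abel

lemma sproj_smul {n : ℕ} (xi N : E (n + 2)) (c : ℝ) (w : E (n + 2)) :
    sproj xi N (c • w) = c • sproj xi N w := by
  simp only [sproj, eta_smul_left, smul_sub, smul_smul]

/-- A closed conformal field orthogonal to the screen distribution makes the
null hypersurface screen quasi-conformal (flat Minkowski ambient form). -/
theorem cc_field_orthogonal_screen_quasi_conformal {n : ℕ}
    (U : Set (E (n + 2))) (hU : IsOpen U)
    (ξ N Z : E (n + 2) → E (n + 2)) (φ : E (n + 2) → ℝ)
    (hξd : ∀ p ∈ U, DifferentiableAt ℝ ξ p)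
    (hNd : ∀ p ∈ U, DifferentiableAt ℝ N p)
    (hZd : ∀ p ∈ U, DifferentiableAt ℝ Z p)
    (hξξ : ∀ p ∈ U, eta (ξ p) (ξ p) = 0)
    (hNN : ∀ p ∈ U, eta (N p) (N p) = 0)
    (hξN : ∀ p ∈ U, eta (ξ p) (N p) = 1)
    (hCC : ∀ p ∈ U, fderiv ℝ Z p = φ p • ContinuousLinearMap.id ℝ (E (n + 2)))
    (hZs : ∀ p ∈ U, Zstar ξ N Z p = 0)
    (hZξ : ∀ p ∈ U, eta (Z p) (ξ p) ≠ 0) :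
    ∀ p ∈ U, ∀ v : E (n + 2), eta v (ξ p) = 0 → eta v (N p) = 0 →
      AN ξ N p v = (-(eta (Z p) (N p) / eta (Z p) (ξ p))) • Astar ξ N p v
        - (φ p / eta (Z p) (ξ p)) • v := by
  intro p hp v hvξ hvN
  set f : E (n + 2) → ℝ := fun q => eta (Z q) (N q) with hfdef
  set g : E (n + 2) → ℝ := fun q => eta (Z q) (ξ q) with hgdef
  have hf : DifferentiableAt ℝ f p := diff_eta (hZd p hp) (hNd p hp)
  have hg : DifferentiableAt ℝ g p := diff_eta (hZd p hp) (hξd p hp)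
  -- Z = f • ξ + g • N near p
  have hZeq : Z =ᶠ[nhds p] fun q => f q • ξ q + g q • N q := by
    filter_upwards [hU.mem_nhds hp] with q hq
    have h := hZs q hq
    simp only [Zstar, sproj] at h
    rw [sub_sub] at h
    rw [sub_eq_zero.mp h]
  have hD : HasFDerivAt (fun q => f q • ξ q + g q • N q)
      ((f p • fderiv ℝ ξ p + (fderiv ℝ f p).smulRight (ξ p)) +
       (g p • fderiv ℝ N p + (fderiv ℝ g p).smulRight (N p))) p :=
    (hf.hasFDerivAt.smul (hξd p hp).hasFDerivAt).add
      (hg.hasFDerivAt.smul (hNd p hp).hasFDerivAt)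
  have hkey : fderiv ℝ Z p = _ := hZeq.fderiv_eq.trans hD.fderiv
  have hEq : φ p • v = (f p • fderiv ℝ ξ p v + fderiv ℝ f p v • ξ p) +
      (g p • fderiv ℝ N p v + fderiv ℝ g p v • N p) := by
    have h1 := congrArg (fun L : E (n + 2) →L[ℝ] E (n + 2) => L v) hkey
    rw [hCC p hp] at h1
    simpa using h1
  -- apply screen projection
  have hSξ : sproj (ξ p) (N p) (ξ p) = 0 := by
    simp [sproj, hξξ p hp, hξN p hp]
  have hSN : sproj (ξ p) (N p) (N p) = 0 := by
    simp [sproj, hNN p hp, eta_comm (N p) (ξ p), hξN p hp]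
  have hSv : sproj (ξ p) (N p) v = v := by
    simp [sproj, hvξ, hvN]
  have hproj := congrArg (sproj (ξ p) (N p)) hEq
  rw [sproj_smul, hSv, sproj_add, sproj_add, sproj_add, sproj_smul, sproj_smul,
      sproj_smul, sproj_smul, hSξ, hSN, smul_zero, smul_zero, add_zero, add_zero] at hproj
  -- rewrite in terms of Astar, AN
  have hA : sproj (ξ p) (N p) (fderiv ℝ ξ p v) = -Astar ξ N p v := by
    simp [Astar]
  have hB : sproj (ξ p) (N p) (fderiv ℝ N p v) = -AN ξ N p v := by
    simp [AN]
  rw [hA, hB] at hproj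
  -- hproj : φ p • v = f p • (-Astar ...) + g p • (-AN ...)
  have hg0 : g p ≠ 0 := hZξ p hp
  apply smul_right_injective (E (n + 2)) hg0
  simp only [smul_sub, smul_smul]
  rw [mul_neg, mul_div_cancel₀ _ hg0, mul_div_cancel₀ _ hg0]
  have : g p • AN ξ N p v = -(f p • Astar ξ N p v) - φ p • v := by
    rw [hproj]; simp [smul_neg]
  rw [this]; simp [neg_smul]; rfl
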